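/- Let f : ℂ → ℂ be holomorphic on an open set D with f'(z) ≠ 0 for all z ∈ D. Define u : D → ℝ by u(z) = Real.log (4 · Complex.normSq (f'(z)) / (1 + Complex.normSq (f(z)))^2). Then u satisfies u_xx + u_yy = -2 e^u on D, where z = x + iy. -/

import Mathlib

open Complex ContinuousLinearMap

noncomputable def rmul (a : ℂ) : ℂ →L[ℝ] ℝ :=
  Complex.reCLM.comp ((ContinuousLinearMap.mul ℝ ℂ) a)

@[simp] lemma rmul_apply (a t : ℂ) : rmul a t = (a * t).re := rfl

lemma hasFDerivAt_normSq' (ζ : ℂ) :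
    HasFDerivAt Complex.normSq ((2:ℝ) • rmul (starRingEnd ℂ ζ)) ζ := by
  have h := ((Complex.reCLM.hasFDerivAt (x := ζ)).mul (Complex.reCLM.hasFDerivAt (x := ζ))).add
    ((Complex.imCLM.hasFDerivAt (x := ζ)).mul (Complex.imCLM.hasFDerivAt (x := ζ)))
  refine h.congr_fderiv ?_
  ext t
  simp [Complex.mul_re]
  ring

/-- real fderiv of `w ↦ normSq (F w)` for `F` complex-differentiable. -/
lemma hasFDerivAt_normSq_comp {F : ℂ → ℂ} {w : ℂ} (hF : DifferentiableAt ℂ F w) :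
    HasFDerivAt (fun w => Complex.normSq (F w))
      ((2:ℝ) • rmul (starRingEnd ℂ (F w) * deriv F w)) w := by
  have hFr : HasFDerivAt F
      ((ContinuousLinearMap.smulRight (1 : ℂ →L[ℂ] ℂ) (deriv F w)).restrictScalars ℝ) w :=
    (hF.hasDerivAt.hasFDerivAt).restrictScalars ℝ
  have h := (hasFDerivAt_normSq' (F w)).comp w hFr
  refine h.congr_fderiv ?_
  ext t
  simp
  ring


lemma key (c : ℝ) (F : ℂ → ℂ) (V : Set ℂ) (hV : IsOpen V)
    (hFd : ∀ w ∈ V, DifferentiableAt ℂ F w)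
    (hpos : ∀ w ∈ V, 0 < c + Complex.normSq (F w)) :
    ∃ L : ℂ → (ℂ →L[ℝ] ℝ),
      (∀ w ∈ V, HasFDerivAt (fun w => Real.log (c + Complex.normSq (F w))) (L w) w) ∧
      ∀ z ∈ V, ∃ Φ₁ ΦI : ℂ →L[ℝ] ℝ,
        HasFDerivAt (fun w => L w 1) Φ₁ z ∧
        HasFDerivAt (fun w => L w Complex.I) ΦI z ∧
        Φ₁ 1 + ΦI Complex.I
          = 4 * c * Complex.normSq (deriv F z) / (c + Complex.normSq (F z)) ^ 2 := by
  classical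
  set A : ℂ → ℝ := fun w => c + Complex.normSq (F w) with hA
  refine ⟨fun w => (2 * (A w)⁻¹) • rmul (starRingEnd ℂ (F w) * deriv F w), ?_, ?_⟩
  · intro w hw
    have hden : HasFDerivAt A ((2:ℝ) • rmul (starRingEnd ℂ (F w) * deriv F w)) w :=
      (hasFDerivAt_normSq_comp (hFd w hw)).const_add c
    have h := (Real.hasDerivAt_log (hpos w hw).ne').comp_hasFDerivAt w hden
    refine h.congr_fderiv ?_
    ext t
    simp [hA]
    ring
  · intro z hz
    have hDO : DifferentiableOn ℂ F V := fun w hw => (hFd w hw).differentiableWithinAt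
    have han : AnalyticOnNhd ℂ F V := hDO.analyticOnNhd hV
    have hG : DifferentiableAt ℂ (deriv F) z := ((han.deriv) z hz).differentiableAt
    set a := deriv F z with ha
    set b := deriv (deriv F) z with hb
    set p := F z with hp
    have hFr : HasFDerivAt F
        ((ContinuousLinearMap.smulRight (1 : ℂ →L[ℂ] ℂ) a).restrictScalars ℝ) z :=
      ((hFd z hz).hasDerivAt.hasFDerivAt).restrictScalars ℝ
    have hGr : HasFDerivAt (deriv F)
        ((ContinuousLinearMap.smulRight (1 : ℂ →L[ℂ] ℂ) b).restrictScalars ℝ) z :=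
      (hG.hasDerivAt.hasFDerivAt).restrictScalars ℝ
    have hconj : HasFDerivAt (fun w => starRingEnd ℂ (F w))
        ((Complex.conjCLE.toContinuousLinearMap).comp
          ((ContinuousLinearMap.smulRight (1 : ℂ →L[ℂ] ℂ) a).restrictScalars ℝ)) z :=
      (Complex.conjCLE.toContinuousLinearMap.hasFDerivAt).comp z hFr
    have hB := hconj.mul hGr
    have hden : HasFDerivAt A ((2:ℝ) • rmul (starRingEnd ℂ p * a)) z :=
      (hasFDerivAt_normSq_comp (hFd z hz)).const_add c
    have hinv : HasFDerivAt (fun w => (A w)⁻¹)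
        ((-((A z) ^ 2)⁻¹) • ((2:ℝ) • rmul (starRingEnd ℂ p * a))) z :=
      (hasDerivAt_inv (hpos z hz).ne').comp_hasFDerivAt z hden
    have main : ∀ t : ℂ,
        ∃ Φ : ℂ →L[ℝ] ℝ,
          HasFDerivAt (fun w =>
            (2 * (A w)⁻¹) • rmul (starRingEnd ℂ (F w) * deriv F w) t) Φ z ∧
          Φ t = 2 * ((starRingEnd ℂ p * a) * t).re *
                  (-((A z) ^ 2)⁻¹ * (2 * ((starRingEnd ℂ p * a) * t).re))
              + (A z)⁻¹ * (2 * ((starRingEnd ℂ p * (t * b)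
                  + a * (starRingEnd ℂ (t * a))) * t).re) := by
      intro t
      have hnum := ((Complex.reCLM.hasFDerivAt).comp z (hB.mul_const t)).const_mul (2:ℝ)
      have h := hnum.mul hinv
      refine ⟨_, h.congr_of_eventuallyEq (Filter.Eventually.of_forall fun w => ?_), ?_⟩
      · show _ = _
        simp
        ring
      · show _ = _
        simp
        ring
    obtain ⟨Φ₁, h₁, he₁⟩ := main 1
    obtain ⟨ΦI, hI, heI⟩ := main Complex.I
    refine ⟨Φ₁, ΦI, h₁, hI, ?_⟩
    rw [he₁, heI]
    have hS0 : A z ≠ 0 := (hpos z hz).ne'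
    have hc' : c = A z - Complex.normSq p := by simp [hA, hp]
    rw [hc']
    field_simp [Complex.normSq_apply, Complex.mul_re, Complex.mul_im]
    simp only [sub_add_cancel, Complex.normSq_apply, Complex.mul_re, Complex.mul_im, Complex.conj_re,
      Complex.conj_im, Complex.I_re, Complex.I_im, Complex.add_re, Complex.add_im]
    field_simp
    ring



/-- The Laplacian `u_xx + u_yy` of a function `u : ℂ → ℝ`, where `x`, `y` are
the real coordinates `z = x + i y`. -/
noncomputable def lap (u : ℂ → ℝ) (z : ℂ) : ℝ :=
  fderiv ℝ (fun w => fderiv ℝ u w 1) z 1 +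
    fderiv ℝ (fun w => fderiv ℝ u w Complex.I) z Complex.I

/-- If `f` is holomorphic on an open set `D` with `f' ≠ 0`, then
`u = log(4|f'|² / (1+|f|²)²)` solves the elliptic Liouville equation
`u_xx + u_yy = -2 e^u` on `D`. -/
theorem stmt5 (D : Set ℂ) (hD : IsOpen D) (f : ℂ → ℂ)
    (hf : ∀ z ∈ D, DifferentiableAt ℂ f z)
    (hf' : ∀ z ∈ D, deriv f z ≠ 0) :
    let u : ℂ → ℝ := fun z =>
      Real.log (4 * Complex.normSq (deriv f z) / (1 + Complex.normSq (f z)) ^ 2)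
    ∀ z ∈ D, lap u z = -2 * Real.exp (u z) := by
  intro u z hz
  have hDO : DifferentiableOn ℂ f D := fun w hw => (hf w hw).differentiableWithinAt
  have hfa : AnalyticOnNhd ℂ f D := hDO.analyticOnNhd hD
  set g : ℂ → ℂ := deriv f with hg
  have hgD : ∀ w ∈ D, DifferentiableAt ℂ g w := fun w hw => ((hfa.deriv) w hw).differentiableAt
  have hgc : ContinuousOn g D := fun w hw => ((hgD w hw).continuousAt).continuousWithinAt
  set V : Set ℂ := D ∩ g ⁻¹' {0}ᶜ with hV
  have hVopen : IsOpen V := hgc.isOpen_inter_preimage hD isOpen_compl_singleton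
  have hzV : z ∈ V := ⟨hz, fun h => hf' z hz h⟩
  have hVD : V ⊆ D := Set.inter_subset_left
  -- the two pieces
  obtain ⟨Lp, hLp, hLp2⟩ := key 0 g V hVopen (fun w hw => hgD w hw.1)
    (fun w hw => by simpa using Complex.normSq_pos.2 hw.2)
  obtain ⟨Lq, hLq, hLq2⟩ := key 1 f D hD hf
    (fun w _ => by have := Complex.normSq_nonneg (f w); linarith)
  -- u agrees with the sum on V
  have hueq : ∀ w ∈ V, u w = Real.log 4
      + Real.log (0 + Complex.normSq (g w)) + (-2) * Real.log (1 + Complex.normSq (f w)) := by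
    intro w hw
    have h1 : (0:ℝ) < Complex.normSq (g w) := Complex.normSq_pos.2 hw.2
    have h2 : (0:ℝ) < 1 + Complex.normSq (f w) := by
      have := Complex.normSq_nonneg (f w); linarith
    show Real.log _ = _
    rw [Real.log_div (by nlinarith : (0:ℝ) < 4 * Complex.normSq (g w)).ne'
        (by nlinarith : (0:ℝ) < (1 + Complex.normSq (f w)) ^ 2).ne',
      Real.log_mul (by norm_num) h1.ne', Real.log_pow, zero_add]
    push_cast
    ring
  have hu' : ∀ w ∈ V, HasFDerivAt u (Lp w + (-2:ℝ) • Lq w) w := by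
    intro w hw
    have h3 := ((hLp w hw).const_add (Real.log 4)).add ((hLq w (hVD hw)).const_mul (-2:ℝ))
    refine h3.congr_of_eventuallyEq ?_
    filter_upwards [hVopen.mem_nhds hw] with x hx
    exact hueq x hx
  obtain ⟨Φp1, ΦpI, hp1, hpI, hpsum⟩ := hLp2 z hzV
  obtain ⟨Φq1, ΦqI, hq1, hqI, hqsum⟩ := hLq2 z hz
  have hfd : ∀ t : ℂ, (fun w => fderiv ℝ u w t) =ᶠ[nhds z]
      (fun w => Lp w t + (-2:ℝ) * Lq w t) := by
    intro t
    filter_upwards [hVopen.mem_nhds hzV] with x hx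
    rw [(hu' x hx).fderiv]
    simp
  have h1 : HasFDerivAt (fun w => Lp w 1 + (-2:ℝ) * Lq w 1)
      (Φp1 + (-2:ℝ) • Φq1) z := hp1.add (hq1.const_mul (-2:ℝ))
  have hI : HasFDerivAt (fun w => Lp w Complex.I + (-2:ℝ) * Lq w Complex.I)
      (ΦpI + (-2:ℝ) • ΦqI) z := hpI.add (hqI.const_mul (-2:ℝ))
  have e1 : fderiv ℝ (fun w => fderiv ℝ u w 1) z = Φp1 + (-2:ℝ) • Φq1 :=
    (h1.congr_of_eventuallyEq (hfd 1)).fderiv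
  have eI : fderiv ℝ (fun w => fderiv ℝ u w Complex.I) z = ΦpI + (-2:ℝ) • ΦqI :=
    (hI.congr_of_eventuallyEq (hfd Complex.I)).fderiv
  have hgz : (0:ℝ) < Complex.normSq (g z) := Complex.normSq_pos.2 (hf' z hz)
  have hSz : (0:ℝ) < 1 + Complex.normSq (f z) := by
    have := Complex.normSq_nonneg (f z); linarith
  have hexp : Real.exp (u z)
      = 4 * Complex.normSq (g z) / (1 + Complex.normSq (f z)) ^ 2 := by
    apply Real.exp_log
    have : (0:ℝ) < (1 + Complex.normSq (f z)) ^ 2 := by nlinarith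
    exact div_pos (by nlinarith) this
  have hgg : deriv g z = deriv (deriv f) z := by rw [hg]
  rw [lap, e1, eI, hexp]
  simp only [ContinuousLinearMap.add_apply, ContinuousLinearMap.smul_apply, smul_eq_mul]
  have hp0 : Φp1 1 + ΦpI Complex.I = 0 := by rw [hpsum]; ring
  have hq0 : Φq1 1 + ΦqI Complex.I
      = 4 * Complex.normSq (g z) / (1 + Complex.normSq (f z)) ^ 2 := by rw [hqsum]; ring
  linarith [hp0, hq0]
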